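/- For all integers m, i ≥ 0, the Stirling-Carlitz number of the second kind satisfies {q^m − 1 brace q^i − 1}_C = 1 if m = i, and {q^m − 1 brace q^i − 1}_C = 0 if m ≠ i. -/

import Mathlib

open Polynomial PowerSeries

noncomputable section

namespace Carlitz

variable (F : Type) [Field F] [Fintype F]

/-- `q`, the cardinality of the finite field of constants `𝔽_q`. -/
def q : ℕ := Fintype.card F

/-- The Carlitz polynomial `D_i = ∏_{j=0}^{i-1} (θ^{q^i} - θ^{q^j})` (with `D_0 = 1`). -/
def Dpoly (i : ℕ) : Polynomial F :=
  ∏ j ∈ Finset.range i, (Polynomial.X ^ (q F) ^ i - Polynomial.X ^ (q F) ^ j)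

/-- The Carlitz polynomial `L_i = ∏_{j=1}^{i} (θ - θ^{q^j})` (with `L_0 = 1`). -/
def Lpoly (i : ℕ) : Polynomial F :=
  ∏ j ∈ Finset.range i, (Polynomial.X - Polynomial.X ^ (q F) ^ (j + 1))

/-- The Carlitz factorial `Π(n) = ∏_i D_i^{n_i}` where `n = Σ_i n_i q^i` is the base-`q`
expansion of `n`.  This also equals the Carlitz gamma `Γ_{n+1}`. -/
def cfact (n : ℕ) : Polynomial F :=
  ∏ i ∈ Finset.range (Nat.digits (q F) n).length,
    (Dpoly F i) ^ ((Nat.digits (q F) n).getD i 0)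

/-- The inclusion `A = 𝔽_q[θ] → k = 𝔽_q(θ)`. -/
def toK : Polynomial F →+* RatFunc F := algebraMap _ _

/-- The Carlitz exponential `e_C(z) = Σ_{i≥0} z^{q^i}/D_i` as a power series over `k`. -/
def eC : PowerSeries (RatFunc F) :=
  PowerSeries.mk fun n => ∑ i ∈ Finset.range (n + 1),
    if (q F) ^ i = n then (toK F (Dpoly F i))⁻¹ else 0

/-- The Bernoulli-Carlitz numbers `BC_n`, defined by `Σ_n BC_n z^n/Π(n) = z/e_C(z)`:
since `e_C(z) = z · u(z)` where `u(z) = Σ_m (coeff_{m+1} e_C) z^m` has constant term `1`,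
we have `z/e_C(z) = u(z)⁻¹` and `BC_n = Π(n) · coeff_n (u⁻¹)`. -/
def BCnum (n : ℕ) : RatFunc F :=
  toK F (cfact F n) *
    PowerSeries.coeff n
      (PowerSeries.mk fun m => PowerSeries.coeff (m + 1) (eC F))⁻¹

/-- The Stirling-Carlitz numbers of the second kind `{n brace m}_C`, defined by
`Σ_n {n brace m}_C z^n/Π(n) = e_C(z)^m/Π(m)`, i.e. `{n brace m}_C = Π(n)·coeff_n(e_C^m)/Π(m)`. -/
def StC (n m : ℕ) : RatFunc F :=
  toK F (cfact F n) * PowerSeries.coeff n (eC F ^ m) * (toK F (cfact F m))⁻¹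

/-- The (finite) set of strictly decreasing tuples `i : Fin r → ℕ`,
`i_1 > i_2 > ⋯ > i_r ≥ 0`, with all values `< N`. -/
def decTuples (r N : ℕ) : Finset (Fin r → ℕ) :=
  (Finset.univ.filter fun i : Fin r → Fin N => ∀ a b : Fin r, a < b → i b < i a).image
    fun i l => (i l : ℕ)

/-- The leading (largest) entry `i_1` of a (strictly decreasing) tuple. -/
def lead {r : ℕ} (i : Fin r → ℕ) : ℕ := if h : 0 < r then i ⟨0, h⟩ else 0

/-- The multi-poly-Bernoulli-Carlitz numbers `BC_n^{s,j}`, defined by the generating series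
`Σ_n BC_n^{s,j} z^n/Π(n) = Li_s(e_C(z)·u_{1 j_1}, u_{2 j_2}, …, u_{r j_r})/e_C(z)
 = Σ_{i_1 > ⋯ > i_r ≥ 0} e_C(z)^{q^{i_1}-1} ∏_l u_{l j_l}^{q^{i_l}}/L_{i_l}^{s_l}`,
written out coefficientwise (here `u l` is the datum `u_{l j_l} ∈ A`; the coefficient of
`z^n` in `e_C^{q^{i_1}-1}` vanishes whenever `i_1 > n`, so the sum below is complete). -/
def MPBC {r : ℕ} (s : Fin r → ℕ) (u : Fin r → Polynomial F) (n : ℕ) : RatFunc F :=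
  toK F (cfact F n) * ∑ i ∈ decTuples r (n + 1),
    PowerSeries.coeff n (eC F ^ ((q F) ^ lead i - 1)) *
      ∏ l, (toK F (u l)) ^ ((q F) ^ (i l)) * ((toK F (Lpoly F (i l))) ^ (s l))⁻¹

/-- The two-variable rational function field `K₂ = 𝔽_q(θ)(t)`. -/
abbrev K2 := RatFunc (RatFunc F)

/-- The inclusion `k = 𝔽_q(θ) → 𝔽_q(θ)(t)`. -/
def liftK : RatFunc F →+* K2 F :=
  (algebraMap (Polynomial (RatFunc F)) (K2 F)).comp Polynomial.C

/-- The inclusion `A = 𝔽_q[θ] → 𝔽_q(θ)(t)`. -/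
def liftA : Polynomial F →+* K2 F := (liftK F).comp (toK F)

/-- The inclusion of constants `𝔽_q → 𝔽_q(θ)(t)`. -/
def liftF : F →+* K2 F := (liftA F).comp Polynomial.C

/-- Substitution `θ ↦ t` on a polynomial `P ∈ 𝔽_q[θ]`, landing in `𝔽_q(θ)(t)`
(where `t` is the outer variable `RatFunc.X`); e.g. `D_i|_{θ=t}`. -/
def subT (P : Polynomial F) : K2 F :=
  Polynomial.eval (RatFunc.X : K2 F) (P.map (liftF F))

/-- Evaluation of a polynomial in `A[t]` in `𝔽_q(θ)(t)` (coefficients included via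
`A → 𝔽_q(θ)`, the variable `t` sent to the outer `RatFunc.X`). -/
def evalAT (h : Polynomial (Polynomial F)) : K2 F :=
  Polynomial.eval (RatFunc.X : K2 F) (h.map (liftA F))

/-- The power series `1 - Σ_{i≥0} (∏_{j=1}^{i}(t^{q^i} - θ^{q^j})/D_i|_{θ=t}) x^{q^i}`
appearing in the definition of the Anderson-Thakur polynomials. -/
def ATgen : PowerSeries (K2 F) :=
  1 - PowerSeries.mk fun m => ∑ i ∈ Finset.range (m + 1),
    if (q F) ^ i = m then
      (∏ j ∈ Finset.range i,
        ((RatFunc.X : K2 F) ^ (q F) ^ i - (liftK F RatFunc.X) ^ (q F) ^ (j + 1))) *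
        (subT F (Dpoly F i))⁻¹
    else 0

/-- `H : ℕ → A[t]` is the family of Anderson-Thakur polynomials iff
`{1 - Σ_i (∏_{j=1}^{i}(t^{q^i} - θ^{q^j})/D_i|_{θ=t}) x^{q^i}}⁻¹ = Σ_n (H_n/Γ_{n+1}|_{θ=t}) x^n`,
i.e. the product of the left-hand factor with the right-hand series equals `1`. -/
def IsATFamily (H : ℕ → Polynomial (Polynomial F)) : Prop :=
  ATgen F * (PowerSeries.mk fun n => evalAT F (H n) * (subT F (cfact F n))⁻¹) = 1

/-- Reduction of a rational function `x ∈ k` whose denominator is coprime to `℘`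
into `A/℘A`: reduce numerator and denominator (in lowest terms) and divide. -/
def redmod (℘ : Polynomial F) (x : RatFunc F) : Polynomial F ⧸ Ideal.span {℘} :=
  Ideal.Quotient.mk (Ideal.span {℘}) x.num *
    Ring.inverse (Ideal.Quotient.mk (Ideal.span {℘}) x.denom)

/-- The finite multiple zeta value `ζ_{𝒜_k}(s)_℘ ∈ A/℘A`: the sum of
`1/(a_1^{s_1} ⋯ a_r^{s_r})` over monic `a_1, …, a_r ∈ A` with
`deg ℘ > deg a_1 > ⋯ > deg a_r ≥ 0`. -/
def finMZV (℘ : Polynomial F) {r : ℕ} (s : Fin r → ℕ) : Polynomial F ⧸ Ideal.span {℘} :=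
  ∑ᶠ a ∈ {a : Fin r → Polynomial F |
      (∀ l, (a l).Monic) ∧ (StrictAnti fun l => (a l).natDegree) ∧
        ∀ l, (a l).natDegree < ℘.natDegree},
    ∏ l, Ring.inverse (Ideal.Quotient.mk (Ideal.span {℘}) (a l) ^ (s l))

/-- The finite Carlitz multiple polylogarithm
`Li_{𝒜_k,s}(u_1, …, u_r)_℘ = Σ_{deg ℘ > i_1 > ⋯ > i_r ≥ 0} u_1^{q^{i_1}} ⋯ u_r^{q^{i_r}}
/ (L_{i_1}^{s_1} ⋯ L_{i_r}^{s_r}) ∈ A/℘A`. -/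
def finCMPL (℘ : Polynomial F) {r : ℕ} (s : Fin r → ℕ) (u : Fin r → Polynomial F) :
    Polynomial F ⧸ Ideal.span {℘} :=
  ∑ i ∈ decTuples r ℘.natDegree,
    ∏ l, Ideal.Quotient.mk (Ideal.span {℘}) (u l) ^ ((q F) ^ (i l)) *
      Ring.inverse (Ideal.Quotient.mk (Ideal.span {℘}) (Lpoly F (i l)) ^ (s l))


/-! ### Auxiliary lemmas -/

section DigitSum

variable {p : ℕ} [hp : Fact p.Prime]

lemma digitSum_add_le (a b : ℕ) :
    (Nat.digits p (a + b)).sum ≤ (Nat.digits p a).sum + (Nat.digits p b).sum := by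
  obtain ⟨k, hk⟩ := Nat.factorial_mul_factorial_dvd_factorial_add a b
  have hk0 : k ≠ 0 := by
    intro h
    have := Nat.factorial_pos (a + b)
    rw [hk, h, mul_zero] at this
    exact absurd this (lt_irrefl 0)
  have hmono : padicValNat p (Nat.factorial a) + padicValNat p (Nat.factorial b)
      ≤ padicValNat p (Nat.factorial (a + b)) := by
    rw [hk, padicValNat.mul (mul_ne_zero a.factorial_ne_zero b.factorial_ne_zero) hk0,
      padicValNat.mul a.factorial_ne_zero b.factorial_ne_zero]
    exact Nat.le_add_right _ _
  have hm2 := Nat.mul_le_mul_left (p - 1) hmono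
  rw [Nat.mul_add, sub_one_mul_padicValNat_factorial a, sub_one_mul_padicValNat_factorial b,
    sub_one_mul_padicValNat_factorial (a + b)] at hm2
  have ha := Nat.digit_sum_le p a
  have hb := Nat.digit_sum_le p b
  have hab := Nat.digit_sum_le p (a + b)
  omega

lemma digitSum_p_mul (a : ℕ) :
    (Nat.digits p (p * a)).sum = (Nat.digits p a).sum := by
  rcases Nat.eq_zero_or_pos a with rfl | ha
  · simp
  · have hp2 : 1 < p := hp.out.one_lt
    rw [Nat.digits_def' hp2 (Nat.mul_pos (by omega) ha), Nat.mul_mod_right,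
      Nat.mul_div_cancel_left _ (by omega : 0 < p), List.sum_cons, Nat.zero_add]

lemma digitSum_p_pow (c : ℕ) : (Nat.digits p (p ^ c)).sum = 1 := by
  induction c with
  | zero =>
    have hp2 : 1 < p := hp.out.one_lt
    rw [pow_zero, Nat.digits_def' hp2 Nat.one_pos, Nat.mod_eq_of_lt hp2,
      Nat.div_eq_of_lt hp2]
    simp
  | succ c ih => rw [pow_succ, mul_comm, digitSum_p_mul, ih]

lemma digitSum_p_pow_sub_one (c : ℕ) :
    (Nat.digits p (p ^ c - 1)).sum = c * (p - 1) := by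
  induction c with
  | zero => simp
  | succ c ih =>
    have hp2 : 1 < p := hp.out.one_lt
    have hPk : 1 ≤ p ^ c := Nat.one_le_pow _ _ (by omega)
    have hsub : p * (p ^ c - 1) = p * p ^ c - p := by
      rw [Nat.mul_sub, mul_one]
    have hle : p ≤ p * p ^ c := Nat.le_mul_of_pos_right p hPk
    have hexp : p ^ (c + 1) - 1 = p * (p ^ c - 1) + (p - 1) := by
      rw [pow_succ, mul_comm (p ^ c) p, hsub]
      generalize p * p ^ c = P at hle ⊢
      omega
    have hpos : 0 < p ^ (c + 1) - 1 := by
      have : p ≤ p ^ (c + 1) := by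
        calc p = p ^ 1 := (pow_one p).symm
        _ ≤ p ^ (c + 1) := Nat.pow_le_pow_right (by omega) (by omega)
      omega
    rw [Nat.digits_def' hp2 hpos, List.sum_cons]
    have hmod : (p ^ (c + 1) - 1) % p = p - 1 := by
      rw [hexp, Nat.mul_add_mod, Nat.mod_eq_of_lt (by omega)]
    have hdiv : (p ^ (c + 1) - 1) / p = p ^ c - 1 := by
      rw [hexp, Nat.mul_add_div (by omega : 0 < p), Nat.div_eq_of_lt (by omega), Nat.add_zero]
    rw [hmod, hdiv, ih, add_mul, one_mul, add_comm]

end DigitSum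

section FrobCoeff

variable {K : Type*} [Field K] {p : ℕ} [hp : Fact p.Prime] [CharP K p]

lemma coeff_pow_char (g : PowerSeries K) (n : ℕ) :
    PowerSeries.coeff n (g ^ p) =
      if p ∣ n then (PowerSeries.coeff (n / p) g) ^ p else 0 := by
  haveI : ExpChar K p := ExpChar.prime hp.out
  set T : Polynomial K := PowerSeries.trunc (n + 1) g with hT
  have hdvd : (PowerSeries.X : PowerSeries K) ^ (n + 1) ∣ g ^ p - (T : PowerSeries K) ^ p := by
    refine dvd_trans ?_ (sub_dvd_pow_sub_pow g (T : PowerSeries K) p)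
    rw [PowerSeries.X_pow_dvd_iff]
    intro m hm
    rw [map_sub, Polynomial.coeff_coe, hT, PowerSeries.coeff_trunc, if_pos hm, sub_self]
  have h0 : PowerSeries.coeff n (g ^ p - (T : PowerSeries K) ^ p) = 0 :=
    (PowerSeries.X_pow_dvd_iff.mp hdvd) n (Nat.lt_succ_self n)
  rw [map_sub, sub_eq_zero] at h0
  rw [h0, ← Polynomial.coe_pow, Polynomial.coeff_coe, ← Polynomial.map_frobenius_expand,
    Polynomial.coeff_map, Polynomial.coeff_expand hp.out.pos]
  split_ifs with h
  · rw [hT, PowerSeries.coeff_trunc,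
      if_pos (Nat.lt_succ_of_le (Nat.div_le_self n p)), frobenius_def]
  · exact map_zero _

end FrobCoeff

lemma q_two_le : 2 ≤ q F := Fintype.one_lt_card

lemma eC_support {b : ℕ} (h : PowerSeries.coeff b (eC F) ≠ 0) :
    ∃ j, b = q F ^ j := by
  by_contra hc
  push_neg at hc
  apply h
  rw [eC, PowerSeries.coeff_mk]
  exact Finset.sum_eq_zero fun j _ => if_neg fun he => hc j he.symm

lemma constantCoeff_eC : PowerSeries.coeff 0 (eC F) = 0 := by
  rw [eC, PowerSeries.coeff_mk]
  refine Finset.sum_eq_zero fun j _ => if_neg ?_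
  have := q_two_le F
  have : 0 < q F ^ j := Nat.pow_pos (by omega)
  omega

lemma X_dvd_eC : (PowerSeries.X : PowerSeries (RatFunc F)) ∣ eC F := by
  rw [PowerSeries.X_dvd_iff, ← PowerSeries.coeff_zero_eq_constantCoeff_apply]
  exact constantCoeff_eC F

lemma coeff_one_eC : PowerSeries.coeff 1 (eC F) = 1 := by
  rw [eC, PowerSeries.coeff_mk, Finset.sum_range_succ, Finset.sum_range_one]
  have hq := q_two_le F
  rw [if_pos (pow_zero _), if_neg (by rw [pow_one]; omega)]
  simp [Dpoly, toK]

lemma coeff_eC_pow_self (N : ℕ) :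
    PowerSeries.coeff N (eC F ^ N) = 1 := by
  obtain ⟨u, hu⟩ := X_dvd_eC F
  have hcu : PowerSeries.constantCoeff u = 1 := by
    have := coeff_one_eC F
    rw [hu, PowerSeries.coeff_succ_X_mul 0 u,
      PowerSeries.coeff_zero_eq_constantCoeff_apply] at this
    exact this
  rw [hu, mul_pow]
  have := PowerSeries.coeff_X_pow_mul (u ^ N) N 0
  rw [zero_add] at this
  rw [this, PowerSeries.coeff_zero_eq_constantCoeff_apply, map_pow, hcu, one_pow]

lemma coeff_eC_pow_lt {n N : ℕ} (h : n < N) :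
    PowerSeries.coeff n (eC F ^ N) = 0 :=
  (PowerSeries.X_pow_dvd_iff.mp (pow_dvd_pow_of_dvd (X_dvd_eC F) N)) n h

lemma coeff_eC_pow_digitSum_le {p : ℕ} [hp : Fact p.Prime]
    (hq : ∀ j : ℕ, ∃ c : ℕ, q F ^ j = p ^ c) :
    ∀ k n, PowerSeries.coeff n (eC F ^ k) ≠ 0 →
      (Nat.digits p n).sum ≤ k := by
  intro k
  induction k with
  | zero =>
    intro n h
    rw [pow_zero, PowerSeries.coeff_one] at h
    rcases eq_or_ne n 0 with rfl | hn
    · simp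
    · exact absurd (if_neg hn) h
  | succ k ih =>
    intro n h
    rw [pow_succ, PowerSeries.coeff_mul] at h
    obtain ⟨ab, hmem, hne⟩ := Finset.exists_ne_zero_of_sum_ne_zero h
    have h1 : PowerSeries.coeff ab.1 (eC F ^ k) ≠ 0 := by
      intro hz; exact hne (by rw [hz, zero_mul])
    have h2 : PowerSeries.coeff ab.2 (eC F) ≠ 0 := by
      intro hz; exact hne (by rw [hz, mul_zero])
    obtain ⟨j, hj⟩ := eC_support F h2
    obtain ⟨c, hc⟩ := hq j
    have hn : ab.1 + ab.2 = n := Finset.HasAntidiagonal.mem_antidiagonal.mp hmem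
    have hb : (Nat.digits p ab.2).sum = 1 := by rw [hj, hc, digitSum_p_pow]
    calc (Nat.digits p n).sum
        ≤ (Nat.digits p ab.1).sum + (Nat.digits p ab.2).sum := by
          rw [← hn]; exact digitSum_add_le _ _
      _ ≤ k + 1 := by have := ih ab.1 h1; omega

lemma coeff_eC_pow_sub_one_eq_zero {p : ℕ} [hp : Fact p.Prime]
    [CharP (RatFunc F) p] (hq : ∀ j : ℕ, ∃ c : ℕ, q F ^ j = p ^ c) :
    ∀ t n, (p - 1) * t < (Nat.digits p n).sum →
      PowerSeries.coeff n (eC F ^ (p ^ t - 1)) = 0 := by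
  intro t
  induction t with
  | zero =>
    intro n hlt
    rw [Nat.mul_zero] at hlt
    have hn : n ≠ 0 := by rintro rfl; simp at hlt
    rw [pow_zero, Nat.sub_self, pow_zero, PowerSeries.coeff_one, if_neg hn]
  | succ t ih =>
    intro n hlt
    have hp2 : 2 ≤ p := hp.out.two_le
    have hPk : 1 ≤ p ^ t := Nat.one_le_pow _ _ (by omega)
    have hsub : (p ^ t - 1) * p = p ^ t * p - p := by rw [Nat.sub_mul, one_mul]
    have hle : p ≤ p ^ t * p := Nat.le_mul_of_pos_left p hPk
    have hexp : p ^ (t + 1) - 1 = (p ^ t - 1) * p + (p - 1) := by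
      rw [pow_succ, hsub]
      generalize p ^ t * p = P at hle ⊢
      omega
    rw [hexp, pow_add, pow_mul, PowerSeries.coeff_mul]
    refine Finset.sum_eq_zero fun ab hmem => ?_
    have hn : ab.1 + ab.2 = n := Finset.HasAntidiagonal.mem_antidiagonal.mp hmem
    rcases eq_or_ne (PowerSeries.coeff ab.2 (eC F ^ (p - 1))) 0 with h2 | h2
    · rw [h2, mul_zero]
    rw [coeff_pow_char]
    split_ifs with hd
    · rcases eq_or_ne (PowerSeries.coeff (ab.1 / p) (eC F ^ (p ^ t - 1))) 0
        with h1 | h1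
      · rw [h1, zero_pow hp.out.ne_zero, zero_mul]
      · exfalso
        have hs1 : (Nat.digits p (ab.1 / p)).sum ≤ (p - 1) * t :=
          not_lt.mp fun hcon => h1 (ih _ hcon)
        have hs2 : (Nat.digits p ab.2).sum ≤ p - 1 :=
          coeff_eC_pow_digitSum_le F hq (p - 1) ab.2 h2
        have heq : (Nat.digits p ab.1).sum = (Nat.digits p (ab.1 / p)).sum := by
          obtain ⟨a, ha⟩ := hd
          rw [ha, Nat.mul_div_cancel_left _ (by omega : 0 < p), digitSum_p_mul]
        have hadd := digitSum_add_le (p := p) ab.1 ab.2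
        rw [hn] at hadd
        rw [Nat.mul_succ] at hlt
        generalize (p - 1) * t = W at hlt hs1
        omega
    · rw [zero_mul]

lemma Dpoly_ne_zero (i : ℕ) : Dpoly F i ≠ 0 := by
  rw [Dpoly]
  refine Finset.prod_ne_zero_iff.mpr fun j hj => ?_
  intro h
  have hq := q_two_le F
  have hlt : q F ^ j < q F ^ i :=
    Nat.pow_lt_pow_right (by omega) (Finset.mem_range.mp hj)
  have := congrArg (fun P : Polynomial F => P.coeff (q F ^ i)) h
  simp only [Polynomial.coeff_sub, Polynomial.coeff_X_pow, if_pos rfl,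
    if_neg hlt.ne', Polynomial.coeff_zero, sub_zero] at this
  exact one_ne_zero this

lemma toK_cfact_ne_zero (n : ℕ) : toK F (cfact F n) ≠ 0 := by
  have hc : cfact F n ≠ 0 := by
    rw [cfact]
    exact Finset.prod_ne_zero_iff.mpr fun j _ => pow_ne_zero _ (Dpoly_ne_zero F j)
  rw [toK]
  exact fun h => hc (IsFractionRing.injective (Polynomial F) (RatFunc F)
    (h.trans (map_zero _).symm))

/-- For all `m, i ≥ 0`, the Stirling-Carlitz number of the second kind
satisfies `{q^m − 1 brace q^i − 1}_C = 1` if `m = i` and `= 0` otherwise. -/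
theorem StC_qpow_sub_one (m i : ℕ) :
    StC F ((q F) ^ m - 1) ((q F) ^ i - 1) = if m = i then 1 else 0 := by
  classical
  have hq2 : 2 ≤ q F := q_two_le F
  haveI : CharP F (ringChar F) := ringChar.charP F
  set p := ringChar F with hpdef
  have hprime : p.Prime := CharP.char_is_prime F p
  haveI : Fact p.Prime := ⟨hprime⟩
  obtain ⟨e, -, hcard⟩ := FiniteField.card F p
  have hqpow : q F = p ^ (e : ℕ) := hcard
  haveI : CharP (RatFunc F) p :=
    charP_of_injective_algebraMap (algebraMap F (RatFunc F)).injective p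
  by_cases hmi : m = i
  · subst hmi
    rw [if_pos rfl, StC, coeff_eC_pow_self, mul_one]
    exact mul_inv_cancel₀ (toK_cfact_ne_zero F _)
  · rw [if_neg hmi, StC]
    have hcoeff : PowerSeries.coeff (q F ^ m - 1) (eC F ^ (q F ^ i - 1)) = 0 := by
      rcases lt_or_gt_of_ne hmi with h | h
      · apply coeff_eC_pow_lt
        have := Nat.pow_lt_pow_right (by omega : 1 < q F) h
        have : 0 < q F ^ m := Nat.pow_pos (by omega)
        omega
      · have hq' : ∀ j : ℕ, ∃ c : ℕ, q F ^ j = p ^ c :=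
          fun j => ⟨(e : ℕ) * j, by rw [hqpow, ← pow_mul]⟩
        have hqi : q F ^ i - 1 = p ^ ((e : ℕ) * i) - 1 := by rw [hqpow, ← pow_mul]
        rw [hqi]
        apply coeff_eC_pow_sub_one_eq_zero F hq'
        have hnm : q F ^ m - 1 = p ^ ((e : ℕ) * m) - 1 := by rw [hqpow, ← pow_mul]
        rw [hnm, digitSum_p_pow_sub_one]
        have he1 : 1 ≤ (e : ℕ) := e.2
        have hp1 : 0 < p - 1 := by have := hprime.two_le; omega
        have hlt : (e : ℕ) * i < (e : ℕ) * m :=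
          mul_lt_mul_of_pos_left h (by omega : 0 < (e : ℕ))
        calc (p - 1) * ((e : ℕ) * i) < (p - 1) * ((e : ℕ) * m) :=
              mul_lt_mul_of_pos_left hlt hp1
          _ = (e : ℕ) * m * (p - 1) := mul_comm _ _
    rw [hcoeff, mul_zero, zero_mul]

end Carlitz
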